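/- Let M be a topological space and f : M → M a homeomorphism. Then the quotient map q : M × ℝ → T(f) from M × ℝ (with the product topology) onto the mapping torus T(f) is a covering map. -/

import Mathlib

/-- Self-homeomorphisms of a space form a group under composition, so that `f ^ n` makes
sense for `n : ℤ`. -/
instance Homeomorph.instGroup_stmt8 {M : Type*} [TopologicalSpace M] : Group (M ≃ₜ M) where
  mul f g := g.trans f
  one := Homeomorph.refl M
  inv := Homeomorph.symm
  mul_assoc f g h := Homeomorph.ext fun _ => rfl
  one_mul f := Homeomorph.ext fun _ => rfl
  mul_one f := Homeomorph.ext fun _ => rfl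
  inv_mul_cancel f := Homeomorph.ext fun x => f.symm_apply_apply x

/-- The mapping torus `T(f)` of a self-homeomorphism `f` of a topological space `M`: the
quotient of `M × ℝ` (with the product topology) by the `ℤ`-action `n • (x, t) = (fⁿ x, t - n)`,
endowed with the quotient topology. -/
def MappingTorus {M : Type*} [TopologicalSpace M] (f : M ≃ₜ M) : Type _ :=
  Quot (fun p q : M × ℝ => ∃ n : ℤ, q = ((f ^ n) p.1, p.2 - n))

instance {M : Type*} [TopologicalSpace M] (f : M ≃ₜ M) : TopologicalSpace (MappingTorus f) :=
  inferInstanceAs (TopologicalSpace (Quot _))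

namespace MTaux

variable {M : Type*} [TopologicalSpace M] (f : M ≃ₜ M)

lemma coe_mul (g h : M ≃ₜ M) (x : M) : (g * h) x = g (h x) := rfl

lemma pow_add_apply (m n : ℤ) (x : M) : (f ^ (m + n)) x = (f ^ m) ((f ^ n) x) := by
  rw [zpow_add]; rfl

lemma rel_equiv : Equivalence (fun p q : M × ℝ => ∃ n : ℤ, q = ((f ^ n) p.1, p.2 - n)) := by
  constructor
  · exact fun p => ⟨0, by simp⟩
  · rintro p q ⟨n, rfl⟩
    refine ⟨-n, ?_⟩
    rw [Prod.ext_iff]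
    constructor
    · rw [← pow_add_apply, neg_add_cancel]; rfl
    · push_cast; ring
  · rintro p q r ⟨n, rfl⟩ ⟨m, rfl⟩
    refine ⟨m + n, ?_⟩
    rw [Prod.ext_iff]
    constructor
    · rw [pow_add_apply]
    · push_cast; ring

lemma mk_eq_mk {p q : M × ℝ} :
    (Quot.mk _ p : MappingTorus f) = Quot.mk _ q ↔ ∃ n : ℤ, q = ((f ^ n) p.1, p.2 - n) := by
  rw [Quot.eq, (rel_equiv f).eqvGen_iff]

lemma mk_smul (n : ℤ) (p : M × ℝ) :
    (Quot.mk _ (((f ^ n) p.1, p.2 - n) : M × ℝ) : MappingTorus f) = Quot.mk _ p :=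
  ((mk_eq_mk f).mpr ⟨n, rfl⟩).symm

lemma isOpenMap_mk : IsOpenMap (Quot.mk _ : M × ℝ → MappingTorus f) := by
  intro W hW
  rw [← isQuotientMap_quot_mk.isOpen_preimage]
  have heq : (Quot.mk _ : M × ℝ → MappingTorus f) ⁻¹' (Quot.mk _ '' W)
      = ⋃ n : ℤ, (fun p : M × ℝ => ((f ^ n) p.1, p.2 - n)) '' W := by
    ext p
    simp only [Set.mem_preimage, Set.mem_image, Set.mem_iUnion]
    constructor
    · rintro ⟨w, hw, hq⟩
      obtain ⟨n, rfl⟩ := (mk_eq_mk f).mp hq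
      exact ⟨n, w, hw, rfl⟩
    · rintro ⟨n, w, hw, rfl⟩
      exact ⟨w, hw, ((mk_eq_mk f).mpr ⟨n, rfl⟩)⟩
  rw [heq]
  refine isOpen_iUnion fun n => ?_
  have : (fun p : M × ℝ => (((f ^ n) p.1 : M), p.2 - (n : ℝ)))
      = (Homeomorph.prodCongr (f ^ n) (Homeomorph.addRight (-(n : ℝ)))) := by
    funext p; simp [Homeomorph.prodCongr, sub_eq_add_neg, Prod.map]
  rw [this]
  exact (Homeomorph.prodCongr (f ^ n) (Homeomorph.addRight (-(n : ℝ)))).isOpenMap W hW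

end MTaux

namespace MTaux2
open Set MTaux

variable {M : Type*} [TopologicalSpace M] (f : M ≃ₜ M) (t₀ : ℝ)

/-- The open slab of height 1 around `t₀`. -/
def slab : Set (M × ℝ) := {p | p.2 ∈ Ioo (t₀ - 2⁻¹) (t₀ + 2⁻¹)}

lemma isOpen_slab : IsOpen (slab (M := M) t₀) :=
  (isOpen_Ioo).preimage continuous_snd

lemma round_eq_zero_of_slab {p : M × ℝ} (hp : p ∈ slab t₀) : round (t₀ - p.2) = 0 := by
  rw [round_eq_zero_iff]
  obtain ⟨h1, h2⟩ := hp
  constructor <;> [skip; skip] <;> push_cast <;> nlinarith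

lemma slab_inj {p q : M × ℝ} (hp : p ∈ slab t₀) (hq : q ∈ slab t₀)
    (h : (Quot.mk _ p : MappingTorus f) = Quot.mk _ q) : p = q := by
  obtain ⟨n, rfl⟩ := (mk_eq_mk f).mp h
  obtain ⟨h1, h2⟩ := hp
  obtain ⟨h3, h4⟩ := hq
  have hn : n = 0 := by
    have : |(n : ℝ)| < 1 := by
      simp only [slab, mem_setOf_eq] at *
      rw [abs_lt]; constructor <;> nlinarith
    exact_mod_cast by rwa [← Int.cast_abs, ← Int.cast_one, Int.cast_lt, Int.abs_lt_one_iff] at this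
  subst hn
  rw [Prod.ext_iff]
  exact ⟨rfl, by simp⟩

/-- The base set of the trivialization. -/
def U : Set (MappingTorus f) := (Quot.mk _) '' slab t₀

lemma isOpen_U : IsOpen (U f t₀) := isOpenMap_mk f _ (isOpen_slab t₀)

open Classical in
/-- local section picking the representative in the slab. -/
noncomputable def σ (y : MappingTorus f) : M × ℝ :=
  if h : ∃ p, p ∈ slab t₀ ∧ (Quot.mk _ p : MappingTorus f) = y then h.choose
  else (Quot.exists_rep y).choose

lemma σ_spec {y : MappingTorus f} (hy : y ∈ U f t₀) :
    σ f t₀ y ∈ slab t₀ ∧ (Quot.mk _ (σ f t₀ y) : MappingTorus f) = y := by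
  obtain ⟨p, hp, rfl⟩ := hy
  have h : ∃ q, q ∈ slab t₀ ∧ (Quot.mk _ q : MappingTorus f) = Quot.mk _ p := ⟨p, hp, rfl⟩
  unfold σ
  rw [dif_pos h]
  exact h.choose_spec

lemma σ_eq {p : M × ℝ} (hp : p ∈ slab t₀) : σ f t₀ (Quot.mk _ p) = p := by
  have hy : (Quot.mk _ p : MappingTorus f) ∈ U f t₀ := ⟨p, hp, rfl⟩
  exact slab_inj f t₀ (σ_spec f t₀ hy).1 hp (σ_spec f t₀ hy).2

lemma continuousOn_σ : ContinuousOn (σ f t₀) (U f t₀) := by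
  rw [continuousOn_iff']
  intro W hW
  refine ⟨(Quot.mk _) '' (W ∩ slab t₀), isOpenMap_mk f _ (hW.inter (isOpen_slab t₀)), ?_⟩
  ext y
  simp only [Set.mem_inter_iff, Set.mem_preimage]
  constructor
  · rintro ⟨hσW, hy⟩
    exact ⟨⟨σ f t₀ y, ⟨hσW, (σ_spec f t₀ hy).1⟩, (σ_spec f t₀ hy).2⟩, hy⟩
  · rintro ⟨⟨p, ⟨hpW, hps⟩, rfl⟩, hy⟩
    rw [σ_eq f t₀ hps]
    exact ⟨hpW, hy⟩

lemma mem_source_iff {p : M × ℝ} :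
    p ∈ (Quot.mk _ : M × ℝ → MappingTorus f) ⁻¹' (U f t₀) ↔
      ∃ n : ℤ, p.2 ∈ Ioo (t₀ - n - 2⁻¹) (t₀ - n + 2⁻¹) := by
  constructor
  · rintro ⟨w, hw, hq⟩
    obtain ⟨n, rfl⟩ := (mk_eq_mk f).mp hq
    obtain ⟨h1, h2⟩ := hw
    exact ⟨n, by constructor <;> simp <;> nlinarith⟩
  · rintro ⟨n, h1, h2⟩
    refine ⟨((f ^ (-n)) p.1, p.2 - ((-n : ℤ) : ℝ)), ?_, mk_smul f (-n) p⟩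
    constructor <;> push_cast <;> nlinarith

lemma round_eq_of_mem {n : ℤ} {s : ℝ} (hs : s ∈ Ioo (t₀ - n - 2⁻¹) (t₀ - n + 2⁻¹)) :
    round (t₀ - s) = n := by
  obtain ⟨h1, h2⟩ := hs
  have h0 : round (t₀ - s - n) = 0 :=
    round_eq_zero_iff.mpr ⟨by push_cast; nlinarith, by push_cast; nlinarith⟩
  rw [round_sub_intCast] at h0
  omega

/-- The trivialization of the mapping-torus quotient map over `U f t₀`, with fiber `ℤ`. -/
noncomputable def triv : Bundle.Trivialization ℤ (Quot.mk _ : M × ℝ → MappingTorus f) where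
  toFun p := (Quot.mk _ p, round (t₀ - p.2))
  invFun yn := ((f ^ yn.2) (σ f t₀ yn.1).1, (σ f t₀ yn.1).2 - (yn.2 : ℝ))
  source := (Quot.mk _ : M × ℝ → MappingTorus f) ⁻¹' (U f t₀)
  target := (U f t₀) ×ˢ Set.univ
  open_source := by
    show IsOpen ((Quot.mk _ : M × ℝ → MappingTorus f) ⁻¹' (U f t₀))
    have : (Quot.mk _ : M × ℝ → MappingTorus f) ⁻¹' (U f t₀)
        = ⋃ n : ℤ, {p : M × ℝ | p.2 ∈ Ioo (t₀ - n - 2⁻¹) (t₀ - n + 2⁻¹)} := by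
      ext p; simpa only [Set.mem_iUnion, Set.mem_setOf_eq] using mem_source_iff f t₀
    rw [this]
    exact isOpen_iUnion fun n => isOpen_Ioo.preimage continuous_snd
  open_target := (isOpen_U f t₀).prod isOpen_univ
  map_source' p hp := ⟨hp, Set.mem_univ _⟩
  map_target' := by
    rintro ⟨y, n⟩ ⟨hy, -⟩
    have h := (σ_spec f t₀ hy).2
    show (Quot.mk _ ((f ^ n) (σ f t₀ y).1, (σ f t₀ y).2 - (n : ℝ)) : MappingTorus f) ∈ U f t₀
    rw [mk_smul f n (σ f t₀ y), h]
    exact hy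
  left_inv' := by
    intro p hp
    have hy : (Quot.mk _ p : MappingTorus f) ∈ U f t₀ := hp
    obtain ⟨hs, hq⟩ := σ_spec f t₀ hy
    obtain ⟨m, hm⟩ := (mk_eq_mk f).mp hq
    have hr : round (t₀ - p.2) = m := by
      have h2 : p.2 = (σ f t₀ (Quot.mk _ p)).2 - m := congrArg Prod.snd hm
      have h3 : t₀ - p.2 = (t₀ - (σ f t₀ (Quot.mk _ p)).2) + m := by rw [h2]; ring
      rw [h3, round_add_intCast, round_eq_zero_of_slab t₀ hs, zero_add]
    show ((f ^ round (t₀ - p.2)) (σ f t₀ (Quot.mk _ p)).1,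
        (σ f t₀ (Quot.mk _ p)).2 - (round (t₀ - p.2) : ℝ)) = p
    rw [hr]
    exact hm.symm
  right_inv' := by
    rintro ⟨y, n⟩ ⟨hy, -⟩
    obtain ⟨hs, hq⟩ := σ_spec f t₀ hy
    rw [Prod.ext_iff]
    refine ⟨(mk_smul f n (σ f t₀ y)).trans hq, ?_⟩
    show round (t₀ - ((σ f t₀ y).2 - (n : ℝ))) = n
    have h3 : t₀ - ((σ f t₀ y).2 - (n : ℝ)) = (t₀ - (σ f t₀ y).2) + n := by ring
    rw [h3, round_add_intCast, round_eq_zero_of_slab t₀ hs, zero_add]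
  continuousOn_toFun := by
    refine ContinuousOn.prodMk continuous_quot_mk.continuousOn ?_
    intro p hp
    obtain ⟨n, hn⟩ := (mem_source_iff f t₀).mp hp
    refine ContinuousAt.continuousWithinAt ?_
    have hV : {q : M × ℝ | q.2 ∈ Ioo (t₀ - n - 2⁻¹) (t₀ - n + 2⁻¹)} ∈ nhds p :=
      (isOpen_Ioo.preimage continuous_snd).mem_nhds hn
    have heq : (fun q : M × ℝ => (round (t₀ - q.2) : ℤ)) =ᶠ[nhds p] fun _ => (n : ℤ) :=
      Filter.eventuallyEq_of_mem hV fun q hq => round_eq_of_mem t₀ hq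
    exact (continuousAt_congr heq).mpr continuousAt_const
  continuousOn_invFun := by
    rintro ⟨y, n⟩ ⟨hy, -⟩
    have hσ : ContinuousWithinAt (σ f t₀) (U f t₀) y := continuousOn_σ f t₀ y hy
    have hg : Continuous (fun w : M × ℝ => (((f ^ n) w.1 : M), w.2 - (n : ℝ))) :=
      ((f ^ n).continuous.comp continuous_fst).prodMk (continuous_snd.sub continuous_const)
    have hσ' : ContinuousWithinAt (fun z : MappingTorus f × ℤ => σ f t₀ z.1)
        ((U f t₀) ×ˢ Set.univ) (y, n) :=
      ContinuousWithinAt.comp (g := σ f t₀) (f := (Prod.fst : MappingTorus f × ℤ → MappingTorus f))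
        (x := (y, n)) hσ continuousWithinAt_fst fun z (hz : z ∈ (U f t₀) ×ˢ Set.univ) => hz.1
    have hF : ContinuousWithinAt
        (fun z : MappingTorus f × ℤ => (((f ^ n) (σ f t₀ z.1).1 : M), (σ f t₀ z.1).2 - (n : ℝ)))
        ((U f t₀) ×ˢ Set.univ) (y, n) :=
      hg.continuousAt.comp_continuousWithinAt hσ'
    have hmem : {z : MappingTorus f × ℤ | z.2 = n} ∈ nhdsWithin (y, n) ((U f t₀) ×ˢ Set.univ) :=
      mem_nhdsWithin_of_mem_nhds
        (((isOpen_discrete ({n} : Set ℤ)).preimage continuous_snd).mem_nhds rfl)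
    refine hF.congr_of_eventuallyEq (Filter.eventuallyEq_of_mem hmem fun z hz => ?_) rfl
    have hz' : z.2 = n := hz
    show ((f ^ z.2) (σ f t₀ z.1).1, (σ f t₀ z.1).2 - (z.2 : ℝ))
      = ((f ^ n) (σ f t₀ z.1).1, (σ f t₀ z.1).2 - (n : ℝ))
    rw [hz']
  baseSet := U f t₀
  open_baseSet := isOpen_U f t₀
  source_eq := rfl
  target_eq := rfl
  proj_toFun p _ := rfl

end MTaux2

/-- For any topological space `M` and homeomorphism `f : M ≃ₜ M`, the
quotient map `M × ℝ → T(f)` onto the mapping torus is a covering map. -/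
theorem stmt8 {M : Type*} [TopologicalSpace M] (f : M ≃ₜ M) :
    IsCoveringMap (Quot.mk _ : M × ℝ → MappingTorus f) := by
  refine IsCoveringMap.mk _ (fun _ => ℤ)
    (fun x => MTaux2.triv f ((Quot.exists_rep x).choose.2)) (fun x => ?_)
  have h := (Quot.exists_rep x).choose_spec
  set p := (Quot.exists_rep x).choose
  show x ∈ MTaux2.U f p.2
  rw [← h]
  exact ⟨p, ⟨by norm_num, by norm_num⟩, rfl⟩
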